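/- If there exists k ≥ 1 such that the matrix (𝓒𝓕)^k has spectral radius strictly less than 1, and the noises v_n and w_{l,n} are integrable random vectors with zero mean, then for every node l and every integrable initialization, E[ε_{l,n}] → 0 as n → ∞. -/

import Mathlib

open Matrix Finset Kronecker MeasureTheory Filter
open scoped NNReal ENNReal Topology

/-- Block-diagonal matrix with blocks `F l`, indexed over node–coordinate pairs. -/
def blockDiagNodes {ι : Type*} [DecidableEq ι] {d e : ℕ}
    (F : ι → Matrix (Fin d) (Fin e) ℝ) : Matrix (ι × Fin d) (ι × Fin e) ℝ :=
  Matrix.of fun q r => if q.1 = r.1 then F q.1 q.2 r.2 else 0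

/-- A real square matrix has spectral radius strictly less than one:
every complex eigenvalue has modulus `< 1`. -/
def SpecRadiusLtOne {n : Type*} [Fintype n] [DecidableEq n]
    (M : Matrix n n ℝ) : Prop :=
  ∀ z ∈ spectrum ℂ (M.map Complex.ofReal), ‖z‖ < 1


section Spectral

attribute [local instance] Matrix.linftyOpNormedRing Matrix.linftyOpNormedAlgebra

variable {m : Type*} [Fintype m] [DecidableEq m]

lemma entry_norm_le (Q : Matrix m m ℂ) (i j : m) : ‖Q i j‖ ≤ ‖Q‖ := by
  have h1 : ‖Q i j‖₊ ≤ ‖Q‖₊ := by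
    rw [Matrix.linfty_opNNNorm_def]
    calc ‖Q i j‖₊ ≤ ∑ j', ‖Q i j'‖₊ :=
          Finset.single_le_sum (f := fun j' => ‖Q i j'‖₊) (fun _ _ => zero_le)
            (Finset.mem_univ j)
      _ ≤ _ := Finset.le_sup (f := fun i => ∑ j', ‖Q i j'‖₊) (Finset.mem_univ i)
  exact_mod_cast h1

lemma exists_pow_norm_lt_one (M : Matrix m m ℝ) {k : ℕ} (hk : 1 ≤ k)
    (h : SpecRadiusLtOne (M ^ k)) :
    ∃ N : ℕ, 1 ≤ N ∧ ‖(M.map (Complex.ofReal : ℝ → ℂ)) ^ N‖ < 1 := by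
  haveI : CompleteSpace (Matrix m m ℂ) := FiniteDimensional.complete ℂ _
  set P : Matrix m m ℂ := M.map (Complex.ofReal : ℝ → ℂ) with hP
  have hPk : (M ^ k).map (Complex.ofReal : ℝ → ℂ) = P ^ k := by
    exact map_pow ((Complex.ofRealHom).mapMatrix) M k
  have hsp : spectralRadius ℂ (P ^ k) < 1 := by
    by_cases hne : (spectrum ℂ (P ^ k)).Nonempty
    · have hfin : (spectrum ℂ (P ^ k)).Finite := Set.toFinite _
      set t : Finset ℝ≥0 := hfin.toFinset.image (fun z => ‖z‖₊) with ht
      have htne : t.Nonempty := by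
        obtain ⟨z, hz⟩ := hne
        exact ⟨‖z‖₊, Finset.mem_image.2 ⟨z, hfin.mem_toFinset.2 hz, rfl⟩⟩
      set r : ℝ≥0 := t.max' htne with hr
      have hrlt : r < 1 := by
        obtain ⟨z, hz, hzr⟩ := Finset.mem_image.1 (t.max'_mem htne)
        have := h z (by rw [hPk]; exact hfin.mem_toFinset.1 hz)
        rw [hr, ← hzr]
        exact_mod_cast this
      have hle : spectralRadius ℂ (P ^ k) ≤ (r : ENNReal) := by
        refine iSup₂_le fun z hz => ?_
        exact_mod_cast Finset.le_max' t ‖z‖₊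
          (Finset.mem_image.2 ⟨z, hfin.mem_toFinset.2 hz, rfl⟩)
      exact lt_of_le_of_lt hle (by exact_mod_cast hrlt)
    · rw [Set.not_nonempty_iff_eq_empty] at hne
      simp [spectralRadius, hne]
  have hgel := spectrum.pow_nnnorm_pow_one_div_tendsto_nhds_spectralRadius (P ^ k)
  have hev : ∀ᶠ n : ℕ in atTop, ((‖(P ^ k) ^ n‖₊ : ENNReal) ^ (1 / (n : ℝ))) < 1 :=
    hgel.eventually_lt_const hsp
  obtain ⟨j, hjlt, hj1⟩ := (hev.and (eventually_ge_atTop 1)).exists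
  have hjpos : (0 : ℝ) < 1 / (j : ℝ) := by positivity
  have hlt1 : ‖(P ^ k) ^ j‖₊ < 1 := by
    by_contra hge
    push_neg at hge
    have : (1 : ENNReal) ≤ ((‖(P ^ k) ^ j‖₊ : ENNReal) ^ (1 / (j : ℝ))) := by
      calc (1 : ENNReal) = 1 ^ (1 / (j : ℝ)) := by simp
        _ ≤ _ := ENNReal.rpow_le_rpow (by exact_mod_cast hge) hjpos.le
    exact absurd hjlt (not_lt.2 this)
  refine ⟨k * j, Nat.one_le_iff_ne_zero.2 (by positivity), ?_⟩
  rw [pow_mul]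
  exact_mod_cast hlt1

lemma pow_entry_tendsto_zero' (M : Matrix m m ℝ) {k : ℕ} (hk : 1 ≤ k)
    (h : SpecRadiusLtOne (M ^ k)) (i j : m) :
    Tendsto (fun n => (M ^ n) i j) atTop (𝓝 0) := by
  obtain ⟨N, hN1, hnorm⟩ := exists_pow_norm_lt_one M hk h
  set P : Matrix m m ℂ := M.map (Complex.ofReal : ℝ → ℂ) with hP
  have hNpos : 0 < N := hN1
  have key : Tendsto (fun n => ‖P ^ n‖) atTop (𝓝 0) := by
    set Cst : ℝ := ∑ r ∈ Finset.range N, ‖P ^ r‖ with hCst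
    have hdiv : Tendsto (fun n : ℕ => n / N) atTop atTop := by
      refine tendsto_atTop_atTop.2 fun b => ⟨b * N, fun n hn => ?_⟩
      exact (Nat.le_div_iff_mul_le hNpos).2 hn
    have hQ : Tendsto (fun q : ℕ => ‖(P ^ N) ^ q‖) atTop (𝓝 0) :=
      tendsto_zero_iff_norm_tendsto_zero.mp
        (tendsto_pow_atTop_nhds_zero_of_norm_lt_one hnorm)
    have hprod : Tendsto (fun n : ℕ => ‖(P ^ N) ^ (n / N)‖ * Cst) atTop (𝓝 (0 * Cst)) :=
      ((hQ.comp hdiv).mul_const Cst)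
    rw [zero_mul] at hprod
    refine squeeze_zero (fun n => norm_nonneg _) (fun n => ?_) hprod
    have hsplit : P ^ n = (P ^ N) ^ (n / N) * P ^ (n % N) := by
      rw [← pow_mul, ← pow_add, Nat.div_add_mod]
    calc ‖P ^ n‖ ≤ ‖(P ^ N) ^ (n / N)‖ * ‖P ^ (n % N)‖ := by
          rw [hsplit]; exact norm_mul_le _ _
      _ ≤ ‖(P ^ N) ^ (n / N)‖ * Cst := by
          refine mul_le_mul_of_nonneg_left ?_ (norm_nonneg _)
          exact Finset.single_le_sum (fun r _ => norm_nonneg _)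
            (Finset.mem_range.2 (Nat.mod_lt n hNpos))
  refine squeeze_zero_norm (fun n => ?_) key
  have hPn : P ^ n = (M ^ n).map (Complex.ofReal : ℝ → ℂ) := by
    exact (map_pow ((Complex.ofRealHom).mapMatrix) M n).symm
  calc ‖(M ^ n) i j‖ = ‖(P ^ n) i j‖ := by rw [hPn]; simp [Matrix.map_apply]
    _ ≤ ‖P ^ n‖ := entry_norm_le _ i j

end Spectral

section IntHelp

variable {Ω : Type*} [MeasurableSpace Ω] (μ : Measure Ω)

lemma integrable_mulVec_coord' {d' e' : ℕ} (B : Matrix (Fin e') (Fin d') ℝ)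
    {f : Ω → Fin d' → ℝ} (hf : ∀ b, Integrable (fun ω => f ω b) μ) (a : Fin e') :
    Integrable (fun ω => B.mulVec (f ω) a) μ := by
  simp only [Matrix.mulVec, dotProduct]
  exact integrable_finset_sum _ fun b _ => (hf b).const_mul _

lemma integral_mulVec_coord' {d' e' : ℕ} (B : Matrix (Fin e') (Fin d') ℝ)
    {f : Ω → Fin d' → ℝ} (hf : ∀ b, Integrable (fun ω => f ω b) μ) (a : Fin e') :
    ∫ ω, B.mulVec (f ω) a ∂μ = B.mulVec (fun b => ∫ ω, f ω b ∂μ) a := by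
  simp only [Matrix.mulVec, dotProduct]
  rw [integral_finset_sum _ fun b _ => (hf b).const_mul _]
  simp [MeasureTheory.integral_const_mul]

end IntHelp

/-- If there exists `k ≥ 1` such that `(𝓒𝓕)^k` has spectral radius
strictly less than `1`, and the noises `v_n` and `w_{l,n}` are integrable random vectors
with zero mean, then for every node `l` and every integrable initialization,
`E[ε_{l,n}] → 0` as `n → ∞`. -/
theorem distributed_filter_unbiased_of_power_stable
    {d p : ℕ} {ι : Type*} [Fintype ι] [DecidableEq ι]
    {Ω : Type*} [MeasurableSpace Ω] (μ : Measure Ω) [IsProbabilityMeasure μ]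
    (Nbhd : ι → Finset ι) (hself : ∀ l, l ∈ Nbhd l)
    (A : Matrix (Fin d) (Fin d) ℝ)
    (H : ι → Matrix (Fin p) (Fin d) ℝ)
    (G : ι → Matrix (Fin d) (Fin p) ℝ)
    (c : ι → ι → ℝ)
    (hc0 : ∀ l i, 0 ≤ c l i)
    (hcsupp : ∀ l i, i ∉ Nbhd l → c l i = 0)
    (hcrow : ∀ l, ∑ i ∈ Nbhd l, c l i = 1)
    (C : Matrix ι ι ℝ) (hC : ∀ l i, C l i = c l i)
    -- some power of `𝓒𝓕` has spectral radius `< 1`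
    (hpow : ∃ k : ℕ, 1 ≤ k ∧ SpecRadiusLtOne
      (((C ⊗ₖ (1 : Matrix (Fin d) (Fin d) ℝ)) *
        blockDiagNodes fun l => (1 - G l * H l) * A) ^ k))
    -- the distributed filter
    (x v : ℕ → Ω → Fin d → ℝ)
    (w y : ι → ℕ → Ω → Fin p → ℝ)
    (φ xhat : ι → ℕ → Ω → Fin d → ℝ)
    (hx : ∀ n ω, x (n + 1) ω = A.mulVec (x n ω) + v n ω)
    (hy : ∀ l n ω, y l n ω = (H l).mulVec (x n ω) + w l n ω)
    (hφ : ∀ l n ω, φ l (n + 1) ω =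
      ((1 - G l * H l) * A).mulVec (xhat l n ω) + (G l).mulVec (y l (n + 1) ω))
    (hxhat : ∀ l n ω, xhat l (n + 1) ω = ∑ i ∈ Nbhd l, c l i • φ i (n + 1) ω)
    -- the noises are integrable with zero mean
    (hvint : ∀ n a, Integrable (fun ω => v n ω a) μ)
    (hvmean : ∀ n a, ∫ ω, v n ω a ∂μ = 0)
    (hwint : ∀ l n b, Integrable (fun ω => w l n ω b) μ)
    (hwmean : ∀ l n b, ∫ ω, w l n ω b ∂μ = 0)
    -- integrable initialization of the state and of the estimates
    (hxint : ∀ a, Integrable (fun ω => x 1 ω a) μ)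
    (hxhatint : ∀ l a, Integrable (fun ω => xhat l 1 ω a) μ) :
    ∀ l a, Tendsto (fun n => ∫ ω, (x n ω a - xhat l n ω a) ∂μ) atTop (nhds 0) := by
  classical
  set F : ι → Matrix (Fin d) (Fin d) ℝ := fun l => (1 - G l * H l) * A with hF
  set Mmat : Matrix (ι × Fin d) (ι × Fin d) ℝ :=
    (C ⊗ₖ (1 : Matrix (Fin d) (Fin d) ℝ)) * blockDiagNodes F with hMmat
  obtain ⟨k, hk1, hs⟩ := hpow
  -- row sums over univ
  have hcrow' : ∀ l, ∑ i, c l i = 1 := by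
    intro l
    rw [← Finset.sum_subset (Finset.subset_univ (Nbhd l))
      (fun i _ hi => hcsupp l i hi)]
    exact hcrow l
  -- integrability of the state
  have hxI : ∀ n a', Integrable (fun ω => x (n + 1) ω a') μ := by
    intro n
    induction n with
    | zero => exact hxint
    | succ n ih =>
      intro a'
      have hfe : (fun ω => x (n + 1 + 1) ω a') =
          fun ω => A.mulVec (x (n + 1) ω) a' + v (n + 1) ω a' :=
        funext fun ω => by rw [hx]; rfl
      rw [hfe]
      exact (integrable_mulVec_coord' μ A ih a').add (hvint _ _)
  have hyI : ∀ n l' b, Integrable (fun ω => y l' (n + 1) ω b) μ := by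
    intro n l' b
    have hfe : (fun ω => y l' (n + 1) ω b) =
        fun ω => (H l').mulVec (x (n + 1) ω) b + w l' (n + 1) ω b :=
      funext fun ω => by rw [hy]; rfl
    rw [hfe]
    exact (integrable_mulVec_coord' μ _ (hxI n) b).add (hwint _ _ _)
  -- integrability of the estimates
  have hxhatI : ∀ n i a', Integrable (fun ω => xhat i (n + 1) ω a') μ := by
    intro n
    induction n with
    | zero => exact hxhatint
    | succ n ih =>
      intro i a'
      have hφI : ∀ j a'', Integrable (fun ω => φ j (n + 2) ω a'') μ := by
        intro j a''
        have hfe : (fun ω => φ j (n + 2) ω a'') =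
            fun ω => ((1 - G j * H j) * A).mulVec (xhat j (n + 1) ω) a''
              + (G j).mulVec (y j (n + 2) ω) a'' :=
          funext fun ω => by rw [hφ]; rfl
        rw [hfe]
        exact (integrable_mulVec_coord' μ _ (fun b => ih j b) a'').add
          (integrable_mulVec_coord' μ _ (fun b => hyI (n + 1) j b) a'')
      have hfe : (fun ω => xhat i (n + 1 + 1) ω a') =
          fun ω => ∑ j ∈ Nbhd i, c i j * φ j (n + 2) ω a' :=
        funext fun ω => by rw [hxhat]; simp [Finset.sum_apply]
      rw [hfe]
      exact integrable_finset_sum _ fun j _ => (hφI j a').const_mul _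
  have hεI : ∀ n i b, Integrable (fun ω => x (n + 1) ω b - xhat i (n + 1) ω b) μ :=
    fun n i b => (hxI n b).sub (hxhatI n i b)
  -- expectations
  set e : ℕ → (ι × Fin d) → ℝ :=
    fun n q => ∫ ω, (x n ω q.2 - xhat q.1 n ω q.2) ∂μ with he
  -- pointwise error recursion, per node
  have hkeyvec : ∀ n (i : ι) ω, x (n + 2) ω - φ i (n + 2) ω =
      (F i).mulVec (x (n + 1) ω - xhat i (n + 1) ω)
        + (1 - G i * H i).mulVec (v (n + 1) ω) - (G i).mulVec (w i (n + 2) ω) := by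
    intro n i ω
    have step1 : ∀ (X xh : Fin d → ℝ) (w' : Fin p → ℝ),
        X - ((F i).mulVec xh + (G i).mulVec ((H i).mulVec X + w')) =
        (1 - G i * H i).mulVec X - (F i).mulVec xh - (G i).mulVec w' := by
      intro X xh w'
      simp only [Matrix.sub_mulVec, Matrix.one_mulVec, Matrix.mulVec_add,
        Matrix.mulVec_mulVec]
      abel
    rw [hφ, hy]
    rw [show ((1 - G i * H i) * A) *ᵥ xhat i (n + 1) ω = (F i).mulVec (xhat i (n + 1) ω ) from rfl]
    rw [step1, hx (n + 1), Matrix.mulVec_add, Matrix.mulVec_mulVec,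
      Matrix.mulVec_sub]
    rw [show (1 - G i * H i) * A = F i from rfl]
    abel
  have hptw : ∀ n (l' : ι) ω (a' : Fin d),
      x (n + 2) ω a' - xhat l' (n + 2) ω a' =
      ∑ i, c l' i * ((F i).mulVec (x (n + 1) ω - xhat i (n + 1) ω) a'
        + (1 - G i * H i).mulVec (v (n + 1) ω) a'
        - (G i).mulVec (w i (n + 2) ω) a') := by
    intro n l' ω a'
    have hsum : xhat l' (n + 2) ω a' = ∑ i, c l' i * φ i (n + 2) ω a' := by
      rw [hxhat]
      rw [← Finset.sum_subset (Finset.subset_univ (Nbhd l'))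
        (fun i _ hi => by simp [hcsupp l' i hi])]
      simp [Finset.sum_apply]
    have h1 : ∑ i, c l' i * (x (n + 2) ω a' - φ i (n + 2) ω a')
        = (∑ i, c l' i) * x (n + 2) ω a' - ∑ i, c l' i * φ i (n + 2) ω a' := by
      simp only [mul_sub]
      rw [Finset.sum_sub_distrib, ← Finset.sum_mul]
    calc x (n + 2) ω a' - xhat l' (n + 2) ω a'
        = ∑ i, c l' i * (x (n + 2) ω a' - φ i (n + 2) ω a') := by
          rw [hsum, h1, hcrow', one_mul]
      _ = _ := by
          refine Finset.sum_congr rfl fun i _ => ?_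
          have := congrFun (hkeyvec n i ω) a'
          simp only [Pi.sub_apply, Pi.add_apply] at this
          rw [this]
  -- expectation recursion
  have hrec : ∀ n, e (n + 2) = Mmat.mulVec (e (n + 1)) := by
    intro n
    funext q
    obtain ⟨l', a'⟩ := q
    have hI1 : ∀ i : ι, Integrable
        (fun ω => (F i).mulVec (x (n + 1) ω - xhat i (n + 1) ω) a') μ :=
      fun i => integrable_mulVec_coord' μ _ (fun b => hεI n i b) a'
    have hI2 : ∀ i : ι, Integrable
        (fun ω => (1 - G i * H i).mulVec (v (n + 1) ω) a') μ :=
      fun i => integrable_mulVec_coord' μ _ (fun b => hvint (n + 1) b) a'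
    have hI3 : ∀ i : ι, Integrable
        (fun ω => (G i).mulVec (w i (n + 2) ω) a') μ :=
      fun i => integrable_mulVec_coord' μ _ (fun b => hwint i (n + 2) b) a'
    have hL : e (n + 2) (l', a') =
        ∑ i, c l' i * ((F i).mulVec (fun b => e (n + 1) (i, b)) a') := by
      show (∫ ω, (x (n + 2) ω a' - xhat l' (n + 2) ω a') ∂μ) = _
      rw [show (fun ω => x (n + 2) ω a' - xhat l' (n + 2) ω a')
          = fun ω => ∑ i, c l' i * ((F i).mulVec (x (n + 1) ω - xhat i (n + 1) ω) a'
            + (1 - G i * H i).mulVec (v (n + 1) ω) a'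
            - (G i).mulVec (w i (n + 2) ω) a')
        from funext fun ω => hptw n l' ω a']
      have hIi : ∀ i ∈ Finset.univ, Integrable (fun ω =>
          c l' i * ((F i).mulVec (x (n + 1) ω - xhat i (n + 1) ω) a'
            + (1 - G i * H i).mulVec (v (n + 1) ω) a'
            - (G i).mulVec (w i (n + 2) ω) a')) μ :=
        fun i _ => (((hI1 i).add (hI2 i)).sub (hI3 i)).const_mul _
      rw [integral_finset_sum _ hIi]
      refine Finset.sum_congr rfl fun i _ => ?_
      rw [MeasureTheory.integral_const_mul]
      congr 1
      have hadd : Integrable (fun ω =>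
          (F i).mulVec (x (n + 1) ω - xhat i (n + 1) ω) a'
            + (1 - G i * H i).mulVec (v (n + 1) ω) a') μ := (hI1 i).add (hI2 i)
      rw [integral_sub hadd (hI3 i),
        integral_add (hI1 i) (hI2 i),
        integral_mulVec_coord' μ (F i)
          (f := fun ω => x (n + 1) ω - xhat i (n + 1) ω) (fun b => hεI n i b) a',
        integral_mulVec_coord' μ _ (fun b => hvint (n + 1) b) a',
        integral_mulVec_coord' μ _ (fun b => hwint i (n + 2) b) a']
      have hv0 : (fun b => ∫ ω, v (n + 1) ω b ∂μ) = 0 :=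
        funext fun b => hvmean (n + 1) b
      have hw0 : (fun b => ∫ ω, w i (n + 2) ω b ∂μ) = 0 :=
        funext fun b => hwmean i (n + 2) b
      rw [hv0, hw0, Matrix.mulVec_zero, Matrix.mulVec_zero]
      simp only [Pi.zero_apply, add_zero, sub_zero]
      congr 1
    have hent : ∀ (i : ι) (b : Fin d), Mmat (l', a') (i, b) = c l' i * F i a' b := by
      intro i b
      simp only [hMmat, Matrix.mul_apply, Fintype.sum_prod_type,
        kroneckerMap_apply, blockDiagNodes, Matrix.of_apply, Matrix.one_apply]
      simp [mul_ite, ite_mul, zero_mul, mul_zero, Finset.sum_ite_eq,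
        Finset.sum_ite_eq', hC]
    have hR : Mmat.mulVec (e (n + 1)) (l', a') =
        ∑ i, c l' i * ((F i).mulVec (fun b => e (n + 1) (i, b)) a') := by
      show (∑ r : ι × Fin d, Mmat (l', a') r * e (n + 1) r) = _
      rw [Fintype.sum_prod_type]
      refine Finset.sum_congr rfl fun i _ => ?_
      simp only [hent]
      simp [Matrix.mulVec, dotProduct, Finset.mul_sum, mul_assoc]
    show e (n + 2) (l', a') = Mmat.mulVec (e (n + 1)) (l', a')
    rw [hL, hR]
  -- powers
  have hpowe : ∀ n, e (n + 1) = (Mmat ^ n).mulVec (e 1) := by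
    intro n
    induction n with
    | zero => simp [Matrix.one_mulVec]
    | succ n ih =>
      rw [show n + 1 + 1 = n + 2 from rfl, hrec n, ih, Matrix.mulVec_mulVec,
        ← pow_succ']
  intro l a
  have hMat : ∀ r : ι × Fin d,
      Tendsto (fun n => (Mmat ^ n) (l, a) r) atTop (𝓝 0) :=
    fun r => pow_entry_tendsto_zero' Mmat hk1 hs (l, a) r
  have hshift : Tendsto (fun n => e (n + 1) (l, a)) atTop (𝓝 0) := by
    have hfe : (fun n => e (n + 1) (l, a)) =
        fun n => ∑ r : ι × Fin d, (Mmat ^ n) (l, a) r * e 1 r :=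
      funext fun n => by rw [hpowe n]; rfl
    rw [hfe]
    have ht : Tendsto (fun n => ∑ r : ι × Fin d, (Mmat ^ n) (l, a) r * e 1 r)
        atTop (𝓝 (∑ r : ι × Fin d, (0 : ℝ) * e 1 r)) :=
      tendsto_finset_sum _ fun r _ => (hMat r).mul_const _
    simpa using ht
  have : (fun n => ∫ ω, (x n ω a - xhat l n ω a) ∂μ) = fun n => e n (l, a) := rfl
  rw [this]
  exact (Filter.tendsto_add_atTop_iff_nat 1).mp hshift
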